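/- For any integers n ≥ 1 and a ≥ 2, there exists a labeling function assigning to each element of {1,...,n} a distinct string of length ⌈log_a n⌉ over the alphabet {0,1,...,a} such that in every position, each letter is used at most ⌈n/a⌉ times. -/

import Mathlib

private lemma digits_eq (a : ℕ) (ha : 0 < a) :
    ∀ ℓ x y, x < a ^ ℓ → y < a ^ ℓ →
      (∀ i < ℓ, x / a ^ i % a = y / a ^ i % a) → x = y := by
  intro ℓ
  induction ℓ with
  | zero => intro x y hx hy _; simp [pow_zero] at hx hy; omega
  | succ ℓ ih =>
    intro x y hx hy h
    have h0 : x % a = y % a := by simpa using h 0 (Nat.succ_pos ℓ)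
    have hx' : x / a < a ^ ℓ := by
      rw [Nat.div_lt_iff_lt_mul ha]; rw [pow_succ] at hx; exact hx
    have hy' : y / a < a ^ ℓ := by
      rw [Nat.div_lt_iff_lt_mul ha]; rw [pow_succ] at hy; exact hy
    have h' : ∀ i < ℓ, x / a / a ^ i % a = y / a / a ^ i % a := by
      intro i hi
      have := h (i + 1) (by omega)
      rw [pow_succ'] at this
      rwa [Nat.div_div_eq_div_mul, Nat.div_div_eq_div_mul]
    have hxy := ih (x / a) (y / a) hx' hy' h'
    calc x = a * (x / a) + x % a := (Nat.div_add_mod x a).symm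
    _ = a * (y / a) + y % a := by rw [hxy, h0]
    _ = y := Nat.div_add_mod y a

/-- For any integers `n ≥ 1` and `a ≥ 2`, there is a labeling assigning to each element of
`{1,…,n}` a distinct string of length `⌈log_a n⌉` over the alphabet `{0,1,…,a}` such that
in every position each letter is used at most `⌈n/a⌉` times. -/
theorem stmt0 (n a : ℕ) (hn : 1 ≤ n) (ha : 2 ≤ a) :
    ∃ L : Fin n → Fin (Nat.clog a n) → Fin (a + 1),
      Function.Injective L ∧
      ∀ (i : Fin (Nat.clog a n)) (c : Fin (a + 1)),
        (Finset.univ.filter (fun x : Fin n => L x i = c)).card ≤ (n + a - 1) / a := by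
  have ha0 : 0 < a := by omega
  set ℓ := Nat.clog a n with hℓ
  refine ⟨fun x i =>
      ⟨if i.val = 0 then x.val % a else (x.val / a ^ i.val + x.val) % a, by
        split <;> exact lt_trans (Nat.mod_lt _ ha0) (Nat.lt_succ_self a)⟩, ?_, ?_⟩
  · -- injectivity
    intro x y hxy
    have hpow : n ≤ a ^ ℓ := Nat.le_pow_clog (by omega) n
    have key : ∀ i < ℓ, x.val / a ^ i % a = y.val / a ^ i % a := by
      intro i hi
      have hv := congrArg Fin.val (congrFun hxy ⟨i, hi⟩)
      simp only at hv
      rcases Nat.eq_zero_or_pos i with h0 | h1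
      · subst h0
        simp only [if_pos rfl] at hv
        simpa using hv
      · have hv0 := congrArg Fin.val (congrFun hxy ⟨0, by omega⟩)
        simp only [if_pos rfl] at hv0
        rw [if_neg (by omega), if_neg (by omega)] at hv
        have : x.val / a ^ i ≡ y.val / a ^ i [MOD a] :=
          Nat.ModEq.add_right_cancel hv0 hv
        exact this
    exact Fin.ext (digits_eq a ha0 ℓ x.val y.val (lt_of_lt_of_le x.isLt hpow)
      (lt_of_lt_of_le y.isLt hpow) key)
  · -- count bound
    intro i c
    have hcr : (Finset.range ((n + a - 1) / a)).card = (n + a - 1) / a :=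
      Finset.card_range _
    rw [← hcr]
    apply Finset.card_le_card_of_injOn (fun x => x.val / a)
    · intro x _
      simp only [Finset.mem_coe, Finset.mem_range]
      have e : (n + a - 1) / a = (n - 1) / a + 1 := by
        rw [show n + a - 1 = (n - 1) + a by omega, Nat.add_div_right _ ha0]
      have : x.val / a ≤ (n - 1) / a := Nat.div_le_div_right (by omega)
      omega
    · intro x hx y hy hdiv
      simp only [Finset.mem_coe, Finset.mem_filter] at hx hy
      have hvx := congrArg Fin.val hx.2
      have hvy := congrArg Fin.val hy.2
      simp only at hvx hvy hdiv
      have hmod : x.val % a = y.val % a := by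
        rcases Nat.eq_zero_or_pos i.val with h0 | h1
        · rw [if_pos h0] at hvx hvy; omega
        · rw [if_neg (by omega)] at hvx hvy
          have hdigit : x.val / a ^ i.val = y.val / a ^ i.val := by
            have e : ∀ z : ℕ, z / a ^ i.val = z / a / a ^ (i.val - 1) := by
              intro z
              conv_lhs => rw [show i.val = (i.val - 1) + 1 by omega]
              rw [pow_succ', ← Nat.div_div_eq_div_mul]
            rw [e, e, hdiv]
          rw [hdigit] at hvx
          have : x.val ≡ y.val [MOD a] :=
            Nat.ModEq.add_left_cancel' _ (hvx.trans hvy.symm)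
          exact this
      have e3 : x.val / a = y.val / a := hdiv
      exact Fin.ext (by
        calc x.val = a * (x.val / a) + x.val % a := (Nat.div_add_mod x.val a).symm
        _ = a * (y.val / a) + y.val % a := by rw [e3, hmod]
        _ = y.val := Nat.div_add_mod y.val a)
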